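/- arXiv:1205.7022 — 2 statements merged into one kernel-verified Lean document; each statement's English description precedes it below -/
import Mathlib

section
/- Let (Ω,𝒜,ℙ) be a probability space, p ∈ [2,4], and let 𝒢 be a sub-σ-algebra of 𝒜. Then for any real random variables X and Y in L^p(ℙ), ‖E(XY|𝒢)‖_{p/2} ≤ ‖E(X²|𝒢) − E(X²)‖_{p/2} + ‖Y‖_p² + (E(X²))^{1/2} ‖Y‖_2. -/
open MeasureTheory Real Filter ENNReal


private lemma my_sqrt_add_le {x y : ℝ} (hx : 0 ≤ x) (hy : 0 ≤ y) :
    Real.sqrt (x + y) ≤ Real.sqrt x + Real.sqrt y := by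
  rw [show x + y = Real.sqrt x ^ 2 + Real.sqrt y ^ 2 by rw [Real.sq_sqrt hx, Real.sq_sqrt hy]]
  have h : Real.sqrt x ^ 2 + Real.sqrt y ^ 2 ≤ (Real.sqrt x + Real.sqrt y) ^ 2 := by
    nlinarith [Real.sqrt_nonneg x, Real.sqrt_nonneg y]
  calc Real.sqrt (Real.sqrt x ^ 2 + Real.sqrt y ^ 2)
      ≤ Real.sqrt ((Real.sqrt x + Real.sqrt y) ^ 2) := Real.sqrt_le_sqrt h
    _ = Real.sqrt x + Real.sqrt y := Real.sqrt_sq (by positivity)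

private lemma my_support_line {q a x : ℝ} (hq : 1 ≤ q) (ha : 0 ≤ a) (hx : 0 ≤ x) :
    a ^ q + q * a ^ (q - 1) * (x - a) ≤ x ^ q := by
  rcases ha.eq_or_lt with rfl | ha'
  · rcases hq.eq_or_lt with rfl | hq'
    · simp [Real.rpow_natCast]
    · rw [Real.zero_rpow (by linarith), Real.zero_rpow (by linarith)]
      simpa using Real.rpow_nonneg hx q
  · have hs : (-1 : ℝ) ≤ x / a - 1 := by
      have : 0 ≤ x / a := div_nonneg hx ha'.le
      linarith
    have hb := one_add_mul_self_le_rpow_one_add hs hq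
    have h1 : 1 + (x / a - 1) = x / a := by ring
    rw [h1] at hb
    have h2 : (x / a) ^ q = x ^ q / a ^ q := Real.div_rpow hx ha'.le q
    rw [h2] at hb
    have haq : 0 < a ^ q := Real.rpow_pos_of_pos ha' q
    have h3 : a ^ q * (1 + q * (x / a - 1)) ≤ x ^ q := by
      calc a ^ q * (1 + q * (x / a - 1)) ≤ a ^ q * (x ^ q / a ^ q) := by
            exact mul_le_mul_of_nonneg_left hb haq.le
        _ = x ^ q := by field_simp
    have h4 : a ^ (q - 1) = a ^ q / a := by
      rw [Real.rpow_sub ha', Real.rpow_one]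
    calc a ^ q + q * a ^ (q - 1) * (x - a)
        = a ^ q * (1 + q * (x / a - 1)) := by rw [h4]; field_simp
      _ ≤ x ^ q := h3

private lemma my_sup_line {q b z : ℝ} (hq : 1 ≤ q) (hb : 0 ≤ b)
    (h : ∀ a : ℚ, 0 ≤ (a : ℝ) → (a : ℝ) ^ q + q * (a : ℝ) ^ (q - 1) * (b - (a : ℝ)) ≤ z) :
    b ^ q ≤ z := by
  apply _root_.le_of_forall_pos_le_add
  intro c hc
  set M : ℝ := q * (b + 1) ^ (q - 1) with hM
  have hM0 : 0 ≤ M := by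
    apply mul_nonneg (by linarith)
    exact Real.rpow_nonneg (by linarith) _
  set δ : ℝ := min 1 (c / (M + 1)) with hδ
  have hδ0 : 0 < δ := lt_min one_pos (div_pos hc (by linarith))
  obtain ⟨a, hab, habδ⟩ := exists_rat_btwn (show b < b + δ by linarith)
  have ha0 : (0:ℝ) ≤ (a:ℝ) := le_of_lt (lt_of_le_of_lt hb hab)
  have key := h a ha0
  have h1 : b ^ q ≤ (a : ℝ) ^ q := Real.rpow_le_rpow hb hab.le (by linarith)
  have h2 : (a : ℝ) ^ (q - 1) ≤ (b + 1) ^ (q - 1) := by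
    apply Real.rpow_le_rpow ha0 _ (by linarith)
    have : δ ≤ 1 := min_le_left _ _
    linarith
  have h3 : q * (a : ℝ) ^ (q - 1) * ((a : ℝ) - b) ≤ M * δ := by
    have hab2 : (a : ℝ) - b ≤ δ := by linarith
    have hab3 : 0 ≤ (a : ℝ) - b := by linarith
    calc q * (a : ℝ) ^ (q - 1) * ((a : ℝ) - b)
        ≤ q * (b + 1) ^ (q - 1) * ((a : ℝ) - b) := by
          apply mul_le_mul_of_nonneg_right _ hab3
          exact mul_le_mul_of_nonneg_left h2 (by linarith)
      _ ≤ M * δ := mul_le_mul_of_nonneg_left hab2 hM0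
  have h4 : M * δ ≤ c := by
    have : δ ≤ c / (M + 1) := min_le_right _ _
    calc M * δ ≤ M * (c / (M + 1)) := mul_le_mul_of_nonneg_left this hM0
      _ ≤ c := by
        rw [div_eq_mul_inv]
        rw [show M * (c * (M+1)⁻¹) = c * (M * (M+1)⁻¹) by ring]
        have : M * (M+1)⁻¹ ≤ 1 := by
          rw [mul_inv_le_iff₀ (by linarith)]; linarith
        nlinarith
  nlinarith [key]

private lemma my_pointwise_CS {a b z : ℝ} (ha : 0 ≤ a) (hb : 0 ≤ b)
    (h : ∀ ε : ℚ, 0 < (ε : ℝ) → |z| ≤ ((ε : ℝ) * a + (ε : ℝ)⁻¹ * b) / 2) :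
    |z| ≤ Real.sqrt a * Real.sqrt b := by
  apply _root_.le_of_forall_pos_le_add
  intro c hc
  set η : ℝ := min 1 ((c / 2) ^ 2 / (a + b + 1)) with hη
  have hη0 : 0 < η := lt_min one_pos (by positivity)
  have hη1 : η ≤ 1 := min_le_left _ _
  set sa : ℝ := Real.sqrt (a + η) with hsa
  set sb : ℝ := Real.sqrt (b + η) with hsb
  have hsa0 : 0 < sa := Real.sqrt_pos.2 (by linarith)
  have hsb0 : 0 < sb := Real.sqrt_pos.2 (by linarith)
  have hsa2 : sa ^ 2 = a + η := Real.sq_sqrt (by linarith)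
  have hsb2 : sb ^ 2 = b + η := Real.sq_sqrt (by linarith)
  set t : ℝ := sb / sa with ht
  have ht0 : 0 < t := div_pos hsb0 hsa0
  set η' : ℝ := c / (a + 1) with hη'
  have hη'0 : 0 < η' := div_pos hc (by linarith)
  obtain ⟨ε, hε1, hε2⟩ := exists_rat_btwn (show t < t + η' by linarith)
  have hε0 : 0 < (ε : ℝ) := lt_trans ht0 hε1
  have key := h ε hε0
  -- bound ε * a + ε⁻¹ * b
  have h1 : (ε : ℝ) * a ≤ (t + η') * a := mul_le_mul_of_nonneg_right hε2.le ha
  have h2 : (ε : ℝ)⁻¹ * b ≤ t⁻¹ * b := by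
    apply mul_le_mul_of_nonneg_right _ hb
    exact inv_anti₀ ht0 hε1.le
  have hta : t * a ≤ sa * sb := by
    rw [ht, div_mul_eq_mul_div, div_le_iff₀ hsa0]
    calc sb * a ≤ sb * (a + η) := by nlinarith
      _ = sb * sa ^ 2 := by rw [hsa2]
      _ = sa * sb * sa := by ring
  have htb : t⁻¹ * b ≤ sa * sb := by
    rw [ht, inv_div, div_mul_eq_mul_div, div_le_iff₀ hsb0]
    calc sa * b ≤ sa * (b + η) := by nlinarith
      _ = sa * sb ^ 2 := by rw [hsb2]
      _ = sa * sb * sb := by ring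
  have hsab : sa * sb ≤ Real.sqrt a * Real.sqrt b + c / 2 := by
    have e1 : sa * sb = Real.sqrt ((a + η) * (b + η)) := (Real.sqrt_mul (by linarith) _).symm
    have e2 : (a + η) * (b + η) ≤ a * b + η * (a + b + 1) := by nlinarith
    have e3 : Real.sqrt ((a + η) * (b + η)) ≤ Real.sqrt (a * b) + Real.sqrt (η * (a + b + 1)) := by
      calc Real.sqrt ((a + η) * (b + η)) ≤ Real.sqrt (a * b + η * (a + b + 1)) :=
            Real.sqrt_le_sqrt e2
        _ ≤ Real.sqrt (a * b) + Real.sqrt (η * (a + b + 1)) :=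
            my_sqrt_add_le (by positivity) (by positivity)
    have e4 : Real.sqrt (η * (a + b + 1)) ≤ c / 2 := by
      have : η * (a + b + 1) ≤ (c / 2) ^ 2 := by
        have hle : η ≤ (c / 2) ^ 2 / (a + b + 1) := min_le_right _ _
        calc η * (a + b + 1) ≤ ((c / 2) ^ 2 / (a + b + 1)) * (a + b + 1) :=
              mul_le_mul_of_nonneg_right hle (by linarith)
          _ = (c / 2) ^ 2 := by field_simp
      calc Real.sqrt (η * (a + b + 1)) ≤ Real.sqrt ((c / 2) ^ 2) := Real.sqrt_le_sqrt this
        _ = c / 2 := Real.sqrt_sq (by linarith)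
    rw [e1, ← Real.sqrt_mul ha]
    linarith
  have hη'a : η' * a ≤ c := by
    rw [hη', div_mul_eq_mul_div, div_le_iff₀ (by linarith : (0:ℝ) < a + 1)]
    nlinarith
  calc |z| ≤ ((ε : ℝ) * a + (ε : ℝ)⁻¹ * b) / 2 := key
    _ ≤ ((t + η') * a + t⁻¹ * b) / 2 := by linarith
    _ = (t * a + t⁻¹ * b) / 2 + η' * a / 2 := by ring
    _ ≤ sa * sb + c / 2 := by linarith
    _ ≤ Real.sqrt a * Real.sqrt b + c := by linarith

private lemma my_cond_CS {Ω : Type*} [m0 : MeasurableSpace Ω] (ℙ : Measure Ω)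
    [IsProbabilityMeasure ℙ] {m : MeasurableSpace Ω} (hm : m ≤ m0) {X Y : Ω → ℝ}
    (hX : MemLp X 2 ℙ) (hY : MemLp Y 2 ℙ) :
    ∀ᵐ ω ∂ℙ, |(ℙ[fun ω' => X ω' * Y ω'|m]) ω| ≤
      Real.sqrt ((ℙ[fun ω' => X ω' ^ 2|m]) ω) * Real.sqrt ((ℙ[fun ω' => Y ω' ^ 2|m]) ω) := by
  have hX2 : Integrable (fun ω => X ω ^ 2) ℙ := hX.integrable_sq
  have hY2 : Integrable (fun ω => Y ω ^ 2) ℙ := hY.integrable_sq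
  have hXY : Integrable (fun ω => X ω * Y ω) ℙ := by
    apply Integrable.mono' ((hX2.add hY2).div_const 2) (hX.1.mul hY.1)
    refine Eventually.of_forall fun ω => ?_
    rw [Real.norm_eq_abs, abs_le]
    simp only [Pi.mul_apply, Pi.add_apply]
    constructor <;> nlinarith [sq_nonneg (X ω - Y ω), sq_nonneg (X ω + Y ω)]
  have key : ∀ ε : ℚ, ∀ᵐ ω ∂ℙ, 0 < (ε : ℝ) →
      |(ℙ[fun ω' => X ω' * Y ω'|m]) ω| ≤
        ((ε : ℝ) * (ℙ[fun ω' => X ω' ^ 2|m]) ω + (ε : ℝ)⁻¹ * (ℙ[fun ω' => Y ω' ^ 2|m]) ω) / 2 := by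
    intro ε
    by_cases hε : 0 < (ε : ℝ)
    swap
    · filter_upwards with ω h; exact absurd h hε
    have hεne : (ε : ℝ) ≠ 0 := ne_of_gt hε
    have hg : Integrable (fun ω => (ε:ℝ)/2 * X ω ^ 2 + (ε:ℝ)⁻¹/2 * Y ω ^ 2) ℙ :=
      (hX2.const_mul _).add (hY2.const_mul _)
    have hbound : ∀ s : ℝ, s = 1 ∨ s = -1 → ∀ ω,
        s * (X ω * Y ω) ≤ (ε:ℝ)/2 * X ω ^ 2 + (ε:ℝ)⁻¹/2 * Y ω ^ 2 := by
      intro s hs ω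
      have hkey : (ε:ℝ)/2 * X ω ^ 2 + (ε:ℝ)⁻¹/2 * Y ω ^ 2 - s * (X ω * Y ω)
          = ((ε : ℝ) * X ω - s * Y ω) ^ 2 / (2 * (ε : ℝ)) := by
        rcases hs with rfl | rfl <;> (field_simp; ring)
      nlinarith [div_nonneg (sq_nonneg ((ε : ℝ) * X ω - s * Y ω)) (by linarith : (0:ℝ) ≤ 2 * (ε:ℝ))]
    have h1 : (fun ω => X ω * Y ω) ≤ᵐ[ℙ] fun ω => (ε:ℝ)/2 * X ω ^ 2 + (ε:ℝ)⁻¹/2 * Y ω ^ 2 :=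
      Eventually.of_forall fun ω => by simpa using hbound 1 (Or.inl rfl) ω
    have h1n : (-fun ω => X ω * Y ω) ≤ᵐ[ℙ] fun ω => (ε:ℝ)/2 * X ω ^ 2 + (ε:ℝ)⁻¹/2 * Y ω ^ 2 :=
      Eventually.of_forall fun ω => by simpa using hbound (-1) (Or.inr rfl) ω
    have hm1 := condExp_mono (m := m) hXY hg h1
    have hm2 := condExp_mono (m := m) hXY.neg hg h1n
    have hneg := condExp_neg (m := m) (μ := ℙ) (fun ω => X ω * Y ω)
    have hadd : ℙ[fun ω => (ε:ℝ)/2 * X ω ^ 2 + (ε:ℝ)⁻¹/2 * Y ω ^ 2|m]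
        =ᵐ[ℙ] ℙ[fun ω => (ε:ℝ)/2 * X ω ^ 2|m] + ℙ[fun ω => (ε:ℝ)⁻¹/2 * Y ω ^ 2|m] :=
      condExp_add (hX2.const_mul _) (hY2.const_mul _) m
    have hs1 : ℙ[fun ω => (ε:ℝ)/2 * X ω ^ 2|m]
        =ᵐ[ℙ] fun ω => (ε:ℝ)/2 * (ℙ[fun ω' => X ω' ^ 2|m]) ω := by
      have := condExp_smul (m := m) (μ := ℙ) ((ε:ℝ)/2) (fun ω => X ω ^ 2)
      exact this
    have hs2 : ℙ[fun ω => (ε:ℝ)⁻¹/2 * Y ω ^ 2|m]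
        =ᵐ[ℙ] fun ω => (ε:ℝ)⁻¹/2 * (ℙ[fun ω' => Y ω' ^ 2|m]) ω := by
      have := condExp_smul (m := m) (μ := ℙ) ((ε:ℝ)⁻¹/2) (fun ω => Y ω ^ 2)
      exact this
    filter_upwards [hm1, hm2, hneg, hadd, hs1, hs2] with ω e1 e2 e3 e4 e5 e6 _
    rw [e3] at e2
    rw [Pi.add_apply] at e4
    rw [e4, e5, e6] at e1
    rw [e4, e5, e6, Pi.neg_apply] at e2
    have hhalf : ((ε:ℝ) * (ℙ[fun ω' => X ω' ^ 2|m]) ω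
          + (ε:ℝ)⁻¹ * (ℙ[fun ω' => Y ω' ^ 2|m]) ω) / 2
        = (ε:ℝ)/2 * (ℙ[fun ω' => X ω' ^ 2|m]) ω
          + (ε:ℝ)⁻¹/2 * (ℙ[fun ω' => Y ω' ^ 2|m]) ω := by ring
    rw [abs_le, hhalf]
    exact ⟨by linarith, e1⟩
  have hA0 := condExp_nonneg (m := m) (μ := ℙ)
    (Eventually.of_forall fun ω => sq_nonneg (X ω) : 0 ≤ᵐ[ℙ] fun ω => X ω ^ 2)
  have hB0 := condExp_nonneg (m := m) (μ := ℙ)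
    (Eventually.of_forall fun ω => sq_nonneg (Y ω) : 0 ≤ᵐ[ℙ] fun ω => Y ω ^ 2)
  filter_upwards [ae_all_iff.2 key, hA0, hB0] with ω h hA hB
  exact my_pointwise_CS hA hB fun ε hε => h ε hε

private lemma my_condExp_contraction {Ω : Type*} [m0 : MeasurableSpace Ω] (ℙ : Measure Ω)
    [IsProbabilityMeasure ℙ] {m : MeasurableSpace Ω} (hm : m ≤ m0) {f : Ω → ℝ} {q : ℝ}
    (hq : 1 ≤ q) (hf0 : 0 ≤ᵐ[ℙ] f) (hf : MemLp f (ENNReal.ofReal q) ℙ) :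
    eLpNorm (ℙ[f|m]) (ENNReal.ofReal q) ℙ ≤ eLpNorm f (ENNReal.ofReal q) ℙ := by
  have hq0 : (0:ℝ) < q := lt_of_lt_of_le one_pos hq
  have hfi : Integrable f ℙ := hf.integrable (by
    rw [← ENNReal.ofReal_one]; exact ENNReal.ofReal_le_ofReal hq)
  set φ : Ω → ℝ := fun ω => ‖f ω‖ ^ q with hφdef
  have hφmem : MemLp φ 1 ℙ := by
    have := hf.norm_rpow (by simp [hq0]) (by simp)
    simpa [ENNReal.toReal_ofReal hq0.le, hφdef, Real.norm_eq_abs] using this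
  have hφi : Integrable φ ℙ := memLp_one_iff_integrable.1 hφmem
  have hφ0' : 0 ≤ᵐ[ℙ] φ := Eventually.of_forall fun ω => Real.rpow_nonneg (norm_nonneg _) q
  have key : ∀ a : ℚ, ∀ᵐ ω ∂ℙ, 0 ≤ (a:ℝ) →
      (a:ℝ) ^ q + q * (a:ℝ) ^ (q - 1) * ((ℙ[f|m]) ω - (a:ℝ)) ≤ (ℙ[φ|m]) ω := by
    intro a
    by_cases ha : 0 ≤ (a:ℝ)
    swap
    · filter_upwards with ω h; exact absurd h ha
    set c1 : ℝ := q * (a:ℝ) ^ (q - 1) with hc1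
    set c0 : ℝ := (a:ℝ) ^ q - c1 * (a:ℝ) with hc0
    have hLi : Integrable (fun ω => c1 * f ω + c0) ℙ := (hfi.const_mul c1).add (integrable_const c0)
    have hLe : (fun ω => c1 * f ω + c0) ≤ᵐ[ℙ] φ := by
      filter_upwards [hf0] with ω hω
      have h1 : c1 * f ω + c0 = (a:ℝ) ^ q + q * (a:ℝ) ^ (q - 1) * (f ω - (a:ℝ)) := by
        rw [hc0, hc1]; ring
      have h2 := my_support_line hq ha hω
      rw [h1]
      show _ ≤ ‖f ω‖ ^ q
      rw [Real.norm_eq_abs, abs_of_nonneg hω]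
      exact h2
    have hmono := condExp_mono (m := m) hLi hφi hLe
    have hadd : ℙ[fun ω => c1 * f ω + c0|m]
        =ᵐ[ℙ] fun ω => c1 * (ℙ[f|m]) ω + c0 := by
      have h3 : ℙ[fun ω => c1 * f ω + c0|m]
          =ᵐ[ℙ] ℙ[fun ω => c1 * f ω|m] + ℙ[fun _ => c0|m] :=
        condExp_add (hfi.const_mul c1) (integrable_const c0) m
      have h4 : ℙ[fun ω => c1 * f ω|m] =ᵐ[ℙ] fun ω => c1 * (ℙ[f|m]) ω := by
        have := condExp_smul (m := m) (μ := ℙ) c1 f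
        exact this
      have h5 : ℙ[fun _ : Ω => c0|m] = fun _ => c0 := condExp_const hm c0
      filter_upwards [h3, h4] with ω e3 e4
      rw [e3, Pi.add_apply, e4, h5]
    filter_upwards [hmono, hadd] with ω e1 e2 _
    have : c1 * (ℙ[f|m]) ω + c0 = (a:ℝ) ^ q + q * (a:ℝ) ^ (q - 1) * ((ℙ[f|m]) ω - (a:ℝ)) := by
      rw [hc0, hc1]; ring
    rw [← this, ← e2]
    exact e1
  have hB0 : 0 ≤ᵐ[ℙ] ℙ[f|m] := condExp_nonneg hf0
  have hφ0 : 0 ≤ᵐ[ℙ] ℙ[φ|m] := condExp_nonneg hφ0'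
  have hjen : ∀ᵐ ω ∂ℙ, ‖(ℙ[f|m]) ω‖ ^ q ≤ (ℙ[φ|m]) ω := by
    filter_upwards [ae_all_iff.2 key, hB0] with ω h hB
    rw [Real.norm_eq_abs, abs_of_nonneg hB]
    exact my_sup_line hq hB fun a ha => h a ha
  have e1 : eLpNorm (fun ω => ‖(ℙ[f|m]) ω‖ ^ q) 1 ℙ
      = eLpNorm (ℙ[f|m]) (ENNReal.ofReal q) ℙ ^ q := by
    have := eLpNorm_norm_rpow (p := 1) (μ := ℙ) (ℙ[f|m]) hq0
    simpa [one_mul] using this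
  have e2 : eLpNorm φ 1 ℙ = eLpNorm f (ENNReal.ofReal q) ℙ ^ q := by
    have := eLpNorm_norm_rpow (p := 1) (μ := ℙ) f hq0
    simpa [one_mul, hφdef, Real.norm_eq_abs] using this
  have e3 : eLpNorm (fun ω => ‖(ℙ[f|m]) ω‖ ^ q) 1 ℙ ≤ eLpNorm (ℙ[φ|m]) 1 ℙ := by
    apply eLpNorm_mono_ae
    filter_upwards [hjen, hφ0] with ω h1 h2
    have h3 : ‖‖(ℙ[f|m]) ω‖ ^ q‖ = ‖(ℙ[f|m]) ω‖ ^ q := by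
      rw [Real.norm_eq_abs (‖(ℙ[f|m]) ω‖ ^ q)]
      exact abs_of_nonneg (Real.rpow_nonneg (norm_nonneg _) q)
    rw [h3, Real.norm_eq_abs ((ℙ[φ|m]) ω), abs_of_nonneg h2]
    exact h1
  have e4 : eLpNorm (ℙ[φ|m]) 1 ℙ ≤ eLpNorm φ 1 ℙ := eLpNorm_one_condExp_le_eLpNorm _
  have : eLpNorm (ℙ[f|m]) (ENNReal.ofReal q) ℙ ^ q ≤ eLpNorm f (ENNReal.ofReal q) ℙ ^ q := by
    rw [← e1, ← e2]
    exact le_trans e3 e4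
  exact (ENNReal.rpow_le_rpow_iff hq0).1 this

/-- Inequality (fact) of the paper: for `p ∈ [2,4]`, `X, Y ∈ L^p` and a sub-σ-algebra `𝒢`,
`‖E(XY|𝒢)‖_{p/2} ≤ ‖E(X²|𝒢) − E(X²)‖_{p/2} + ‖Y‖_p² + (E(X²))^{1/2} ‖Y‖_2`. -/
theorem stmt_13 {Ω : Type*} [m0 : MeasurableSpace Ω] (ℙ : Measure Ω) [IsProbabilityMeasure ℙ]
    (p : ℝ) (hp2 : 2 ≤ p) (hp4 : p ≤ 4) (𝒢 : MeasurableSpace Ω) (h𝒢 : 𝒢 ≤ m0)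
    (X Y : Ω → ℝ) (hX : MemLp X (ENNReal.ofReal p) ℙ) (hY : MemLp Y (ENNReal.ofReal p) ℙ) :
    eLpNorm (ℙ[fun ω => X ω * Y ω|𝒢]) (ENNReal.ofReal (p / 2)) ℙ
      ≤ eLpNorm (fun ω => (ℙ[fun ω' => X ω' ^ 2|𝒢]) ω - ∫ ω', X ω' ^ 2 ∂ℙ)
          (ENNReal.ofReal (p / 2)) ℙ
        + (eLpNorm Y (ENNReal.ofReal p) ℙ) ^ 2
        + ENNReal.ofReal (Real.sqrt (∫ ω', X ω' ^ 2 ∂ℙ)) * eLpNorm Y 2 ℙ := by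
  -- basic exponent facts
  have hp0 : (0:ℝ) < p := by linarith
  have hq1 : (1:ℝ) ≤ p / 2 := by linarith
  have hq2 : p / 2 ≤ 2 := by linarith
  set q : ℝ≥0∞ := ENNReal.ofReal (p / 2) with hqdef
  set P : ℝ≥0∞ := ENNReal.ofReal p with hPdef
  have h2P : (2:ℝ≥0∞) ≤ P := by
    rw [hPdef, ← ENNReal.ofReal_ofNat 2]
    exact ENNReal.ofReal_le_ofReal hp2
  have hq1' : (1:ℝ≥0∞) ≤ q := by
    rw [hqdef, ← ENNReal.ofReal_one]
    exact ENNReal.ofReal_le_ofReal hq1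
  have hq2' : q ≤ 2 := by
    rw [hqdef, ← ENNReal.ofReal_ofNat 2]
    exact ENNReal.ofReal_le_ofReal hq2
  have hP2q : P = 2 * q := by
    rw [hPdef, hqdef, ← ENNReal.ofReal_ofNat 2, ← ENNReal.ofReal_mul (by norm_num)]
    congr 1; ring
  have hPhalf : P * ENNReal.ofReal (1/2) = q := by
    rw [hPdef, hqdef, ← ENNReal.ofReal_mul hp0.le]
    congr 1; ring
  have hX2 : MemLp X 2 ℙ := hX.mono_exponent h2P
  have hY2 : MemLp Y 2 ℙ := hY.mono_exponent h2P
  -- notation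
  set A : Ω → ℝ := ℙ[fun ω' => X ω' ^ 2|𝒢] with hAdef
  set B : Ω → ℝ := ℙ[fun ω' => Y ω' ^ 2|𝒢] with hBdef
  set c : ℝ := ∫ ω', X ω' ^ 2 ∂ℙ with hcdef
  have hc0 : 0 ≤ c := integral_nonneg fun ω => sq_nonneg _
  have hA0 : 0 ≤ᵐ[ℙ] A := condExp_nonneg (Eventually.of_forall fun ω => sq_nonneg (X ω))
  have hB0 : 0 ≤ᵐ[ℙ] B := condExp_nonneg (Eventually.of_forall fun ω => sq_nonneg (Y ω))
  -- measurability
  have hAm : AEStronglyMeasurable[m0] A ℙ :=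
    (stronglyMeasurable_condExp.mono h𝒢).aestronglyMeasurable
  have hBm : AEStronglyMeasurable[m0] B ℙ :=
    (stronglyMeasurable_condExp.mono h𝒢).aestronglyMeasurable
  have hsB : AEStronglyMeasurable[m0] (fun ω => Real.sqrt (B ω)) ℙ :=
    Real.continuous_sqrt.comp_aestronglyMeasurable hBm
  have hsA : AEStronglyMeasurable[m0] (fun ω => Real.sqrt |A ω - c|) ℙ :=
    (Real.continuous_sqrt.comp (continuous_abs.comp (continuous_id.sub continuous_const))
      ).comp_aestronglyMeasurable hAm
  have hFm : AEStronglyMeasurable[m0] (fun ω => Real.sqrt |A ω - c| * Real.sqrt (B ω)) ℙ :=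
    hsA.mul hsB
  have hGm : AEStronglyMeasurable[m0] (fun ω => Real.sqrt c * Real.sqrt (B ω)) ℙ :=
    (continuous_const.mul Real.continuous_sqrt).comp_aestronglyMeasurable hBm
  -- pointwise bound
  have hCS := my_cond_CS (m0 := m0) ℙ h𝒢 hX2 hY2
  have hpt : ∀ᵐ ω ∂ℙ, ‖(ℙ[fun ω => X ω * Y ω|𝒢]) ω‖ ≤
      ‖Real.sqrt |A ω - c| * Real.sqrt (B ω) + Real.sqrt c * Real.sqrt (B ω)‖ := by
    filter_upwards [hCS, hA0, hB0] with ω h1 h2 h3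
    have hsqA : Real.sqrt (A ω) ≤ Real.sqrt |A ω - c| + Real.sqrt c := by
      have e1 : A ω ≤ |A ω - c| + c := by
        cases abs_cases (A ω - c) <;> linarith [abs_nonneg (A ω - c)]
      calc Real.sqrt (A ω) ≤ Real.sqrt (|A ω - c| + c) := Real.sqrt_le_sqrt e1
        _ ≤ Real.sqrt |A ω - c| + Real.sqrt c := my_sqrt_add_le (abs_nonneg _) hc0
    have hval : |(ℙ[fun ω => X ω * Y ω|𝒢]) ω| ≤
        Real.sqrt |A ω - c| * Real.sqrt (B ω) + Real.sqrt c * Real.sqrt (B ω) := by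
      calc |(ℙ[fun ω => X ω * Y ω|𝒢]) ω| ≤ Real.sqrt (A ω) * Real.sqrt (B ω) := h1
        _ ≤ (Real.sqrt |A ω - c| + Real.sqrt c) * Real.sqrt (B ω) :=
            mul_le_mul_of_nonneg_right hsqA (Real.sqrt_nonneg _)
        _ = Real.sqrt |A ω - c| * Real.sqrt (B ω) + Real.sqrt c * Real.sqrt (B ω) := by ring
    rw [Real.norm_eq_abs, Real.norm_eq_abs]
    exact le_trans hval (le_abs_self _)
  -- step 1: mono + triangle
  have step1 : eLpNorm (ℙ[fun ω => X ω * Y ω|𝒢]) q ℙ ≤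
      eLpNorm (fun ω => Real.sqrt |A ω - c| * Real.sqrt (B ω)) q ℙ
      + eLpNorm (fun ω => Real.sqrt c * Real.sqrt (B ω)) q ℙ := by
    refine le_trans (eLpNorm_mono_ae hpt) ?_
    exact eLpNorm_add_le hFm hGm hq1'
  -- rpow identities
  have hsqrt_norm : ∀ g : Ω → ℝ, (fun ω => Real.sqrt |g ω|) = fun ω => ‖g ω‖ ^ (1/2 : ℝ) := by
    intro g; funext ω; rw [Real.norm_eq_abs, Real.sqrt_eq_rpow]
  have hFA : eLpNorm (fun ω => Real.sqrt |A ω - c|) P ℙ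
      = eLpNorm (fun ω => A ω - c) q ℙ ^ (1/2 : ℝ) := by
    rw [hsqrt_norm (fun ω => A ω - c)]
    rw [eLpNorm_norm_rpow (fun ω => A ω - c) (by norm_num : (0:ℝ) < 1/2), hPhalf]
  have hFB : eLpNorm (fun ω => Real.sqrt (B ω)) P ℙ = eLpNorm B q ℙ ^ (1/2 : ℝ) := by
    have hcongr : (fun ω => Real.sqrt (B ω)) =ᵐ[ℙ] fun ω => ‖B ω‖ ^ (1/2 : ℝ) := by
      filter_upwards [hB0] with ω h
      rw [Real.norm_eq_abs, abs_of_nonneg h, Real.sqrt_eq_rpow]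
    rw [eLpNorm_congr_ae hcongr, eLpNorm_norm_rpow B (by norm_num : (0:ℝ) < 1/2), hPhalf]
  have hYsq : ∀ r : ℝ≥0∞, eLpNorm (fun ω => Y ω ^ 2) r ℙ = eLpNorm Y (r * 2) ℙ ^ (2:ℝ) := by
    intro r
    have hcongr : (fun ω => Y ω ^ 2) = fun ω => ‖Y ω‖ ^ (2:ℝ) := by
      funext ω
      rw [Real.norm_eq_abs, show ((2:ℝ)) = ((2:ℕ):ℝ) from by norm_num,
        Real.rpow_natCast, sq_abs]
    rw [hcongr, eLpNorm_norm_rpow Y (by norm_num : (0:ℝ) < 2), ENNReal.ofReal_ofNat]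
  -- F term (Hölder)
  have hHolder : eLpNorm (fun ω => Real.sqrt |A ω - c| * Real.sqrt (B ω)) q ℙ ≤
      eLpNorm (fun ω => Real.sqrt |A ω - c|) P ℙ * eLpNorm (fun ω => Real.sqrt (B ω)) P ℙ := by
    have hpqr : 1 / q = 1 / P + 1 / P := by
      rw [hP2q, ENNReal.div_add_div_same, ← ENNReal.mul_div_mul_left (1:ℝ≥0∞) q
        (two_ne_zero) (ENNReal.ofNat_ne_top)]
      norm_num
    haveI : ENNReal.HolderTriple P P q := ⟨by simpa [one_div] using hpqr.symm⟩
    have := eLpNorm_smul_le_mul_eLpNorm (𝕜 := ℝ) (μ := ℙ) (p := P) (q := P) (r := q)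
      hsB hsA
    exact this
  -- contraction for B
  have hY2q : MemLp (fun ω => Y ω ^ 2) q ℙ := by
    refine ⟨(continuous_pow 2).comp_aestronglyMeasurable hY.1, ?_⟩
    rw [hYsq q, mul_comm q 2, ← hP2q]
    exact ENNReal.rpow_lt_top_of_nonneg (by norm_num) hY.2.ne
  have hBcontr : eLpNorm B q ℙ ≤ eLpNorm (fun ω => Y ω ^ 2) q ℙ :=
    my_condExp_contraction (m0 := m0) ℙ h𝒢 hq1 (Eventually.of_forall fun ω => sq_nonneg (Y ω)) hY2q
  set u : ℝ≥0∞ := eLpNorm (fun ω => A ω - c) q ℙ with hudef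
  set v : ℝ≥0∞ := eLpNorm Y P ℙ with hvdef
  have hBv : eLpNorm B q ℙ ≤ v ^ (2:ℝ) := by
    refine le_trans hBcontr ?_
    rw [hYsq q, mul_comm q 2, ← hP2q]
  have hsBv : eLpNorm (fun ω => Real.sqrt (B ω)) P ℙ ≤ v := by
    rw [hFB]
    calc eLpNorm B q ℙ ^ (1/2 : ℝ) ≤ (v ^ (2:ℝ)) ^ (1/2 : ℝ) :=
          ENNReal.rpow_le_rpow hBv (by norm_num)
      _ = v := by rw [← ENNReal.rpow_mul]; norm_num
  have termF : eLpNorm (fun ω => Real.sqrt |A ω - c| * Real.sqrt (B ω)) q ℙ ≤ u + v ^ 2 := by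
    refine le_trans hHolder ?_
    rw [hFA]
    calc u ^ (1/2 : ℝ) * eLpNorm (fun ω => Real.sqrt (B ω)) P ℙ
        ≤ u ^ (1/2 : ℝ) * v := mul_le_mul_right hsBv _
      _ = u ^ (1/2 : ℝ) * (v ^ 2 : ℝ≥0∞) ^ (1/2 : ℝ) := by
          congr 1
          rw [← ENNReal.rpow_natCast v 2, ← ENNReal.rpow_mul]
          norm_num
      _ = (u * v ^ 2) ^ (1/2 : ℝ) := (ENNReal.mul_rpow_of_nonneg _ _ (by norm_num)).symm
      _ ≤ ((u + v ^ 2) * (u + v ^ 2)) ^ (1/2 : ℝ) :=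
          ENNReal.rpow_le_rpow (mul_le_mul' le_self_add le_add_self) (by norm_num)
      _ = ((u + v ^ 2) ^ (2:ℕ)) ^ (1/2 : ℝ) := by rw [sq (u + v ^ 2)]
      _ = u + v ^ 2 := by
          rw [← ENNReal.rpow_natCast (u + v ^ 2) 2, ← ENNReal.rpow_mul]
          norm_num
  have h2half : (2:ℝ≥0∞) * ENNReal.ofReal (1/2) = 1 := by
    rw [← ENNReal.ofReal_ofNat 2, ← ENNReal.ofReal_mul (by norm_num)]
    norm_num
  have hsB2 : eLpNorm (fun ω => Real.sqrt (B ω)) 2 ℙ = eLpNorm B 1 ℙ ^ (1/2 : ℝ) := by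
    have hcongr : (fun ω => Real.sqrt (B ω)) =ᵐ[ℙ] fun ω => ‖B ω‖ ^ (1/2 : ℝ) := by
      filter_upwards [hB0] with ω h
      rw [Real.norm_eq_abs, abs_of_nonneg h, Real.sqrt_eq_rpow]
    rw [eLpNorm_congr_ae hcongr, eLpNorm_norm_rpow B (by norm_num : (0:ℝ) < 1/2), h2half]
  have termG : eLpNorm (fun ω => Real.sqrt c * Real.sqrt (B ω)) q ℙ ≤
      ENNReal.ofReal (Real.sqrt c) * eLpNorm Y 2 ℙ := by
    have e0 : (fun ω => Real.sqrt c * Real.sqrt (B ω))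
        = (Real.sqrt c) • (fun ω => Real.sqrt (B ω)) := rfl
    rw [e0, eLpNorm_const_smul, Real.enorm_eq_ofReal (Real.sqrt_nonneg c)]
    refine mul_le_mul_right ?_ _
    calc eLpNorm (fun ω => Real.sqrt (B ω)) q ℙ
        ≤ eLpNorm (fun ω => Real.sqrt (B ω)) 2 ℙ := eLpNorm_le_eLpNorm_of_exponent_le hq2' hsB
      _ = eLpNorm B 1 ℙ ^ (1/2 : ℝ) := hsB2
      _ ≤ eLpNorm (fun ω => Y ω ^ 2) 1 ℙ ^ (1/2 : ℝ) := by
          refine ENNReal.rpow_le_rpow ?_ (by norm_num)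
          rw [hBdef]
          exact eLpNorm_one_condExp_le_eLpNorm _
      _ = eLpNorm Y 2 ℙ := by
          rw [hYsq 1, one_mul, ← ENNReal.rpow_mul]
          norm_num
  calc eLpNorm (ℙ[fun ω => X ω * Y ω|𝒢]) q ℙ
      ≤ eLpNorm (fun ω => Real.sqrt |A ω - c| * Real.sqrt (B ω)) q ℙ
        + eLpNorm (fun ω => Real.sqrt c * Real.sqrt (B ω)) q ℙ := step1
    _ ≤ (u + v ^ 2) + ENNReal.ofReal (Real.sqrt c) * eLpNorm Y 2 ℙ := add_le_add termF termG
end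

section
/- Let p ∈ [2,4] and let d₀ ∈ L^p(ℙ) be 𝓕₀-measurable with E(d₀|𝓕₋₁) = 0. Set dᵢ = d₀∘Tⁱ and Mₙ = Σ_{i=1}^n dᵢ, and define Vₙ = ‖E₀(Mₙ²) − E(Mₙ²)‖_{p/2} for n ≥ 1 (with V₀ = 0). Then for all nonnegative integers i and j, V_{i+j} ≤ V_i + V_j. -/
open MeasureTheory Filter
open scoped ENNReal NNReal

noncomputable section

section helpers
variable {Ω : Type*}

lemma young_aux {q a r : ℝ} (hq : 1 ≤ q) (ha : 0 ≤ a) (hr : 0 ≤ r) :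
    q * r ^ (q - 1) * a ≤ a ^ q + (q - 1) * r ^ q := by
  rcases eq_or_lt_of_le hq with h1 | h1
  · rw [← h1]; simp [Real.rpow_one]
  · have hq0 : (0:ℝ) < q := by linarith
    have hq1 : q - 1 ≠ 0 := by linarith
    have hpq : q.HolderConjugate (q/(q-1)) := Real.HolderConjugate.conjExponent h1
    have h := Real.young_inequality_of_nonneg ha (Real.rpow_nonneg hr (q-1)) hpq
    have hrq : (r ^ (q-1)) ^ (q/(q-1)) = r ^ q := by
      rw [← Real.rpow_mul hr]; congr 1; field_simp
    rw [hrq] at h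
    have hdiv : r ^ q / (q / (q - 1)) = (q-1) * r ^ q / q := by field_simp
    rw [hdiv] at h
    have := mul_le_mul_of_nonneg_left h (le_of_lt hq0)
    calc q * r ^ (q - 1) * a = q * (a * r ^ (q-1)) := by ring
      _ ≤ q * (a ^ q / q + (q - 1) * r ^ q / q) := this
      _ = a ^ q + (q - 1) * r ^ q := by field_simp

lemma condExp_jensen_rpow {Ω : Type*} {m : MeasurableSpace Ω} [m0 : MeasurableSpace Ω]
    {μ : Measure Ω} [IsProbabilityMeasure μ] (hm : m ≤ m0)
    {q : ℝ} (hq : 1 ≤ q) {f : Ω → ℝ} (hf : MemLp f (ENNReal.ofReal q) μ) :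
    eLpNorm (μ[f|m]) (ENNReal.ofReal q) μ ≤ eLpNorm f (ENNReal.ofReal q) μ := by
  have hq0 : (0:ℝ) < q := by linarith
  have hq'1 : 1 ≤ ENNReal.ofReal q := by
    rw [← ENNReal.ofReal_one]; exact ENNReal.ofReal_le_ofReal hq
  have hq'0 : ENNReal.ofReal q ≠ 0 := by
    simp [ENNReal.ofReal_eq_zero]; linarith
  have hq'top : ENNReal.ofReal q ≠ ∞ := ENNReal.ofReal_ne_top
  have hqtoReal : (ENNReal.ofReal q).toReal = q := ENNReal.toReal_ofReal hq0.le
  have hfi : Integrable f μ := hf.integrable hq'1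
  set g : Ω → ℝ := fun ω => |f ω| with hgdef
  have hgi : Integrable g μ := hfi.abs
  have hgq_int : Integrable (fun ω => g ω ^ q) μ := by
    have := hf.integrable_norm_rpow hq'0 hq'top
    simpa [hqtoReal, Real.norm_eq_abs] using this
  set G : Ω → ℝ := μ[g|m] with hGdef
  set H : Ω → ℝ := μ[fun ω => g ω ^ q|m] with hHdef
  have hGnn : 0 ≤ᵐ[μ] G := condExp_nonneg (ae_of_all _ fun ω => abs_nonneg _)
  have hHnn : 0 ≤ᵐ[μ] H :=
    condExp_nonneg (ae_of_all _ fun ω => Real.rpow_nonneg (abs_nonneg _) q)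
  have hGmeas : Measurable[m] G := stronglyMeasurable_condExp.measurable
  -- |E(f|m)| ≤ G a.e.
  have habs : ∀ᵐ ω ∂μ, |(μ[f|m]) ω| ≤ G ω := by
    have h1 : μ[f|m] ≤ᵐ[μ] G := condExp_mono hfi hgi (ae_of_all _ fun ω => le_abs_self _)
    have h2 : μ[-f|m] ≤ᵐ[μ] G := condExp_mono hfi.neg hgi (ae_of_all _ fun ω => neg_le_abs (f ω))
    have h3 : μ[-f|m] =ᵐ[μ] -μ[f|m] := condExp_neg f m
    filter_upwards [h1, h2, h3] with ω e1 e2 e3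
    rw [abs_le]
    constructor
    · have := e2; rw [e3] at this; simpa using neg_le.mp (by simpa using this)
    · exact e1
  -- key truncated Jensen inequality
  have key : ∀ N : ℕ, ∀ᵐ ω ∂μ, min (max (G ω) 0) (N:ℝ) ^ q ≤ H ω := by
    intro N
    set GN : Ω → ℝ := fun ω => min (max (G ω) 0) (N:ℝ) with hGNdef
    have hGNnn : ∀ ω, 0 ≤ GN ω := fun ω => le_min (le_max_right _ _) (Nat.cast_nonneg N)
    have hGNle : ∀ ω, GN ω ≤ (N:ℝ) := fun ω => min_le_right _ _
    have hGNmeas : Measurable[m] GN := (hGmeas.max measurable_const).min measurable_const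
    set φ : Ω → ℝ := fun ω => q * GN ω ^ (q-1) with hφdef
    have hrpow1 : Measurable (fun x : ℝ => x ^ (q-1)) :=
      (Real.continuous_rpow_const (by linarith)).measurable
    have hrpowq : Measurable (fun x : ℝ => x ^ q) :=
      (Real.continuous_rpow_const hq0.le).measurable
    have hφmeas : Measurable[m] φ := (hrpow1.comp hGNmeas).const_mul q
    have hφnn : ∀ ω, 0 ≤ φ ω := fun ω => by positivity
    have hφbdd : ∀ ω, ‖φ ω‖ ≤ q * (N:ℝ) ^ (q-1) := by
      intro ω
      rw [Real.norm_eq_abs, abs_of_nonneg (hφnn ω)]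
      exact mul_le_mul_of_nonneg_left
        (Real.rpow_le_rpow (hGNnn ω) (hGNle ω) (by linarith)) hq0.le
    have hφg_int : Integrable (fun ω => φ ω * g ω) μ :=
      hgi.bdd_mul ((hφmeas.mono hm le_rfl).aestronglyMeasurable) (ae_of_all _ hφbdd)
    have hGNq_int : Integrable (fun ω => (q-1) * GN ω ^ q) μ := by
      refine Integrable.const_mul ?_ _
      refine MemLp.integrable le_top (memLp_top_of_bound
        ((hrpowq.comp (hGNmeas.mono hm le_rfl)).aestronglyMeasurable) ((N:ℝ) ^ q)
        (ae_of_all _ fun ω => ?_))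
      rw [Real.norm_eq_abs, abs_of_nonneg (Real.rpow_nonneg (hGNnn ω) q)]
      exact Real.rpow_le_rpow (hGNnn ω) (hGNle ω) hq0.le
    have hRHS_int : Integrable (fun ω => g ω ^ q + (q-1) * GN ω ^ q) μ := hgq_int.add hGNq_int
    have hptwise : ∀ ω, φ ω * g ω ≤ g ω ^ q + (q-1) * GN ω ^ q := fun ω => by
      simpa [hφdef, mul_assoc] using young_aux hq (abs_nonneg (f ω)) (hGNnn ω)
    have hmono := condExp_mono (m := m) hφg_int hRHS_int (ae_of_all _ hptwise)
    have hpull : μ[fun ω => φ ω * g ω|m] =ᵐ[μ] fun ω => φ ω * G ω := by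
      have := condExp_mul_of_stronglyMeasurable_left (hφmeas.stronglyMeasurable) hφg_int hgi
      exact this
    have hadd : μ[fun ω => g ω ^ q + (q-1) * GN ω ^ q|m]
        =ᵐ[μ] fun ω => H ω + (q-1) * GN ω ^ q := by
      refine (condExp_add hgq_int hGNq_int _).trans ?_
      have hsm : StronglyMeasurable[m] (fun ω => (q-1) * GN ω ^ q) :=
        ((hrpowq.comp hGNmeas).const_mul _).stronglyMeasurable
      have heq := condExp_of_stronglyMeasurable hm hsm hGNq_int
      filter_upwards with ω
      simp only [Pi.add_apply, heq, hHdef]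
    filter_upwards [hmono, hpull, hadd, hGnn, hHnn] with ω h1 h2 h3 hg0 hh0
    simp only [Pi.zero_apply] at hg0 hh0
    rw [h2, h3] at h1
    show GN ω ^ q ≤ H ω
    rcases eq_or_lt_of_le (hGNnn ω) with hz | hz
    · rw [← hz, Real.zero_rpow hq0.ne']; exact hh0
    · have hGNG : GN ω ≤ G ω := le_trans (min_le_left _ _) (le_of_eq (max_eq_left hg0))
      have h4 : φ ω * GN ω ≤ φ ω * G ω := mul_le_mul_of_nonneg_left hGNG (hφnn ω)
      have h5 : φ ω * GN ω = q * GN ω ^ q := by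
        have hmm : GN ω ^ (q-1) * GN ω = GN ω ^ q := by
          nth_rewrite 2 [← Real.rpow_one (GN ω)]
          rw [← Real.rpow_add hz]
          norm_num
        simp only [hφdef]
        rw [mul_assoc, hmm]
      linarith [h1, h4, h5]
  have hkey : ∀ᵐ ω ∂μ, G ω ^ q ≤ H ω := by
    rw [← ae_all_iff] at key
    filter_upwards [key, hGnn] with ω hω hg0
    simp only [Pi.zero_apply] at hg0
    have := hω ⌈G ω⌉₊
    rw [max_eq_left hg0] at this
    rwa [min_eq_left (Nat.le_ceil _)] at this
  -- conclude
  calc eLpNorm (μ[f|m]) (ENNReal.ofReal q) μ ≤ eLpNorm G (ENNReal.ofReal q) μ := by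
        refine eLpNorm_mono_ae ?_
        filter_upwards [habs, hGnn] with ω h1 h2
        rw [Real.norm_eq_abs, Real.norm_eq_abs, abs_of_nonneg h2]
        exact h1
    _ ≤ eLpNorm f (ENNReal.ofReal q) μ := by
        rw [eLpNorm_eq_lintegral_rpow_enorm_toReal hq'0 hq'top,
          eLpNorm_eq_lintegral_rpow_enorm_toReal hq'0 hq'top, hqtoReal]
        refine ENNReal.rpow_le_rpow ?_ (by positivity)
        have h1 : ∫⁻ ω, ‖G ω‖ₑ ^ q ∂μ ≤ ∫⁻ ω, ENNReal.ofReal (H ω) ∂μ := by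
          refine lintegral_mono_ae ?_
          filter_upwards [hkey, hGnn] with ω h1 h2
          simp only [Pi.zero_apply] at h2
          rw [← ofReal_norm, Real.norm_eq_abs, abs_of_nonneg h2,
            ENNReal.ofReal_rpow_of_nonneg h2 hq0.le]
          exact ENNReal.ofReal_le_ofReal h1
        have h2 : ∫⁻ ω, ENNReal.ofReal (H ω) ∂μ = ENNReal.ofReal (∫ ω, H ω ∂μ) :=
          (ofReal_integral_eq_lintegral_ofReal integrable_condExp hHnn).symm
        have h2' : ∫ ω, H ω ∂μ = ∫ ω, g ω ^ q ∂μ := integral_condExp hm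
        have h3 : ∫⁻ ω, ‖f ω‖ₑ ^ q ∂μ
            = ∫⁻ ω, ENNReal.ofReal (g ω ^ q) ∂μ := by
          refine lintegral_congr fun ω => ?_
          rw [← ofReal_norm,
            ENNReal.ofReal_rpow_of_nonneg (norm_nonneg _) hq0.le, Real.norm_eq_abs]
        have h4 : ∫⁻ ω, ENNReal.ofReal (g ω ^ q) ∂μ = ENNReal.ofReal (∫ ω, g ω ^ q ∂μ) :=
          (ofReal_integral_eq_lintegral_ofReal hgq_int
            (ae_of_all _ fun ω => Real.rpow_nonneg (abs_nonneg _) q)).symm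
        rw [h3, h4, ← h2', ← h2]
        exact h1

lemma condExp_comp_measurePreserving {Ω : Type*} {m : MeasurableSpace Ω}
    [m0 : MeasurableSpace Ω]
    {μ : Measure Ω} [IsProbabilityMeasure μ] {S : Ω → Ω} (hS : MeasurePreserving S μ μ)
    (hemb : MeasurableEmbedding S)
    (hm : m ≤ m0) {g : Ω → ℝ} (hg : Integrable g μ) :
    μ[g ∘ S | MeasurableSpace.comap S m] =ᵐ[μ] (μ[g|m]) ∘ S := by
  have hcm : MeasurableSpace.comap S m ≤ m0 :=
    le_trans (MeasurableSpace.comap_mono hm) (measurable_iff_comap_le.mp hS.measurable)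
  have hSm : @Measurable Ω Ω (MeasurableSpace.comap S m) m S :=
    (@measurable_iff_comap_le Ω Ω (MeasurableSpace.comap S m) m S).mpr le_rfl
  have hgS : Integrable (g ∘ S) μ := (hS.integrable_comp hg.aestronglyMeasurable).mpr hg
  have hcondS : Integrable ((μ[g|m]) ∘ S) μ :=
    (hS.integrable_comp (integrable_condExp).aestronglyMeasurable).mpr integrable_condExp
  refine (ae_eq_condExp_of_forall_setIntegral_eq hcm hgS
    (fun s _ _ => hcondS.integrableOn) (fun s hs _ => ?_) ?_).symm
  · obtain ⟨s', hs', rfl⟩ := hs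
    have e1 : ∫ x in S ⁻¹' s', (μ[g|m] ∘ S) x ∂μ = ∫ x in s', (μ[g|m]) x ∂μ :=
      hS.setIntegral_preimage_emb hemb _ _
    have e2 : ∫ x in S ⁻¹' s', (g ∘ S) x ∂μ = ∫ x in s', g x ∂μ :=
      hS.setIntegral_preimage_emb hemb _ _
    rw [e1, e2, setIntegral_condExp hm hg hs']
  · exact ((stronglyMeasurable_condExp).comp_measurable hSm).aestronglyMeasurable

lemma ae_finset_sum_eq_zero [m0 : MeasurableSpace Ω] {μ : Measure Ω} {ι : Type*}
    (s : Finset ι) {f : ι → Ω → ℝ} (h : ∀ k ∈ s, f k =ᵐ[μ] 0) :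
    (fun ω => ∑ k ∈ s, f k ω) =ᵐ[μ] 0 := by
  classical
  induction s using Finset.induction_on with
  | empty => simp [Filter.EventuallyEq]
  | @insert a s ha ih =>
    have h1 := h a (Finset.mem_insert_self a s)
    have h2 := ih (fun k hk => h k (Finset.mem_insert_of_mem hk))
    filter_upwards [h1, h2] with ω e1 e2
    simp only [Finset.sum_insert ha, Pi.zero_apply] at *
    rw [e1, e2]
    ring

end helpers

/-- Subadditivity (inequality (3.12) of the paper) of
`V_n = ‖E₀(M_n²) − E(M_n²)‖_{p/2}` for the martingale `M_n = Σ_{i=1}^n d₀∘Tⁱ`. -/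
theorem stmt_16
    {Ω : Type*} [m0 : MeasurableSpace Ω] (μP : Measure Ω) [IsProbabilityMeasure μP]
    (T Tinv : Ω → Ω) (hT : MeasurePreserving T μP μP) (hTinv : Measurable Tinv)
    (hTl : Function.LeftInverse Tinv T) (hTr : Function.RightInverse Tinv T)
    (F : ℤ → MeasurableSpace Ω) (hFle : ∀ i, F i ≤ m0)
    (hF0 : F 0 ≤ MeasurableSpace.comap T (F 0))
    (hFsucc : ∀ i : ℤ, F (i + 1) = MeasurableSpace.comap T (F i))
    (p : ℝ) (hp2 : 2 ≤ p) (hp4 : p ≤ 4)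
    (d0 : Ω → ℝ) (hd0meas : Measurable[F 0] d0) (hd0mem : MemLp d0 (ENNReal.ofReal p) μP)
    (hd0mart : μP[d0|F (-1)] =ᵐ[μP] 0)
    (V : ℕ → ℝ)
    (hV : ∀ n : ℕ, V n =
      (eLpNorm (fun ω =>
          (μP[fun ω' => (∑ i ∈ Finset.Icc 1 n, d0 (T^[i] ω')) ^ 2|F 0]) ω -
            ∫ ω', (∑ i ∈ Finset.Icc 1 n, d0 (T^[i] ω')) ^ 2 ∂μP)
        (ENNReal.ofReal (p / 2)) μP).toReal) :
    ∀ i j : ℕ, V (i + j) ≤ V i + V j := by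
  intro i j
  -- scalars
  have hp0 : (0:ℝ) < p := by linarith
  have hq1 : (1:ℝ) ≤ p/2 := by linarith
  have hq'1 : (1:ℝ≥0∞) ≤ ENNReal.ofReal (p/2) := by
    rw [← ENNReal.ofReal_one]; exact ENNReal.ofReal_le_ofReal hq1
  have hp'1 : (1:ℝ≥0∞) ≤ ENNReal.ofReal p := by
    rw [← ENNReal.ofReal_one]; exact ENNReal.ofReal_le_ofReal (by linarith)
  have h2lep : (2:ℝ≥0∞) ≤ ENNReal.ofReal p := by
    rw [show (2:ℝ≥0∞) = ENNReal.ofReal 2 by simp]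
    exact ENNReal.ofReal_le_ofReal hp2
  -- iterates
  have hTn : ∀ n : ℕ, MeasurePreserving (T^[n]) μP μP := fun n => hT.iterate n
  have hembn : ∀ n : ℕ, MeasurableEmbedding (T^[n]) := by
    intro n
    exact (MeasurableEquiv.mk ⟨T^[n], Tinv^[n], hTl.iterate n, hTr.iterate n⟩
      (hT.measurable.iterate n) (hTinv.iterate n)).measurableEmbedding
  -- filtration monotone
  have hcancel : ∀ k : ℤ, MeasurableSpace.comap Tinv (F (k+1)) = F k := by
    intro k
    rw [hFsucc k, MeasurableSpace.comap_comp, hTr.comp_eq_id, MeasurableSpace.comap_id]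
  have hFstep : ∀ k : ℤ, F k ≤ F (k+1) := by
    intro k
    induction k using Int.induction_on with
    | zero => rw [hFsucc 0]; exact hF0
    | succ n ih =>
      calc F ((n:ℤ)+1) = MeasurableSpace.comap T (F n) := hFsucc n
        _ ≤ MeasurableSpace.comap T (F ((n:ℤ)+1)) := MeasurableSpace.comap_mono ih
        _ = F ((n:ℤ)+1+1) := (hFsucc _).symm
    | pred n ih =>
      have h : MeasurableSpace.comap Tinv (F (-(n:ℤ))) ≤ MeasurableSpace.comap Tinv (F (-(n:ℤ)+1)) :=
        MeasurableSpace.comap_mono ih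
      have e1 : MeasurableSpace.comap Tinv (F (-(n:ℤ))) = F (-(n:ℤ)-1) := by
        have := hcancel (-(n:ℤ)-1); rw [sub_add_cancel] at this; exact this
      have e2 : MeasurableSpace.comap Tinv (F (-(n:ℤ)+1)) = F (-(n:ℤ)) := by
        have := hcancel (-(n:ℤ)); exact this
      rw [e1, e2] at h
      convert h using 2 <;> ring
  have hFmono : Monotone F := monotone_int_of_le_succ hFstep
  have hFcomap : ∀ (k : ℤ) (n : ℕ), F (k + n) = MeasurableSpace.comap (T^[n]) (F k) := by
    intro k n
    induction n with
    | zero => simp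
    | succ n ih =>
      have : ((n:ℤ) + 1) = ((n+1 : ℕ) : ℤ) := by push_cast; ring
      rw [show k + ((n+1:ℕ):ℤ) = (k + n) + 1 by push_cast; ring, hFsucc (k+n), ih,
        MeasurableSpace.comap_comp, ← Function.iterate_succ]
  -- the partial sums
  set S : ℕ → Ω → ℝ := fun n ω => ∑ k ∈ Finset.Icc 1 n, d0 (T^[k] ω) with hSdef
  have hd0m0 : Measurable d0 := hd0meas.mono (hFle 0) le_rfl
  have hd0int : Integrable d0 μP := hd0mem.integrable hp'1
  have hdkmem : ∀ k : ℕ, MemLp (fun ω => d0 (T^[k] ω)) (ENNReal.ofReal p) μP := fun k =>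
    hd0mem.comp_measurePreserving (hTn k)
  have hSmem : ∀ n, MemLp (S n) (ENNReal.ofReal p) μP := by
    intro n
    have h := memLp_finsetSum' (Finset.Icc 1 n) (fun k _ => hdkmem k)
    have e : (∑ k ∈ Finset.Icc 1 n, fun ω => d0 (T^[k] ω)) = S n := by
      funext ω; simp [hSdef]
    rwa [e] at h
  have hS2 : ∀ n, MemLp (S n) 2 μP := fun n => (hSmem n).mono_exponent h2lep
  have hSsqint : ∀ n, Integrable (fun ω => (S n ω)^2) μP := fun n => (hS2 n).integrable_sq
  have hBmem2 : MemLp (fun ω => S j (T^[i] ω)) 2 μP := (hS2 j).comp_measurePreserving (hTn i)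
  have hBint : Integrable (fun ω => S j (T^[i] ω)) μP := hBmem2.integrable one_le_two
  have hABint : Integrable (fun ω => S i ω * S j (T^[i] ω)) μP := by
    have h := hBmem2.smul (hS2 i)
      (hpqr := ⟨by rw [inv_one, ENNReal.inv_two_add_inv_two]⟩)
    have e : (S i) • (fun ω => S j (T^[i] ω)) = fun ω => S i ω * S j (T^[i] ω) := by
      funext ω; simp [smul_eq_mul]
    rw [e] at h
    exact memLp_one_iff_integrable.mp h
  have hBsqint : Integrable (fun ω => (S j (T^[i] ω))^2) μP := hBmem2.integrable_sq
  have hhalf : 1 / ENNReal.ofReal (p/2) = 1 / ENNReal.ofReal p + 1 / ENNReal.ofReal p := by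
    have ha0 : ENNReal.ofReal p ≠ 0 := by
      simp only [ne_eq, ENNReal.ofReal_eq_zero, not_le]; linarith
    have h2 : ENNReal.ofReal (p/2) = ENNReal.ofReal p * 2⁻¹ := by
      rw [ENNReal.ofReal_div_of_pos (by norm_num : (0:ℝ) < 2), div_eq_mul_inv]
      norm_num
    rw [h2, one_div, one_div, ENNReal.mul_inv (Or.inl ha0) (Or.inl ENNReal.ofReal_ne_top),
      inv_inv, mul_comm, two_mul]
  have hSsqmem : ∀ n, MemLp (fun ω => (S n ω)^2) (ENNReal.ofReal (p/2)) μP := by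
    intro n
    have h := (hSmem n).smul (hSmem n) (hpqr := ⟨by simpa only [one_div] using hhalf.symm⟩)
    have e : (S n) • (S n) = fun ω => (S n ω)^2 := by
      funext ω; simp [smul_eq_mul, sq]
    rwa [e] at h
  -- martingale property
  have hmart : ∀ m : ℕ, μP[fun ω => d0 (T^[m+1] ω)|F (m : ℤ)] =ᵐ[μP] 0 := by
    intro m
    have hcomap : F (m : ℤ) = MeasurableSpace.comap (T^[m+1]) (F (-1)) := by
      have h := hFcomap (-1) (m+1)
      rw [show (-1 : ℤ) + ((m+1 : ℕ) : ℤ) = (m : ℤ) by push_cast; ring] at h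
      exact h
    rw [hcomap]
    have h := condExp_comp_measurePreserving (hTn (m+1)) (hembn (m+1)) (hFle (-1)) hd0int
    refine h.trans ?_
    have h2 := (hTn (m+1)).quasiMeasurePreserving.ae_eq hd0mart
    simpa using h2
  have hmart' : ∀ (m : ℕ) (l : ℤ), l ≤ (m : ℤ) →
      μP[fun ω => d0 (T^[m+1] ω)|F l] =ᵐ[μP] 0 := by
    intro m l hl
    have h1 := condExp_condExp_of_le (μ := μP) (f := fun ω => d0 (T^[m+1] ω))
      (hFmono hl) (hFle m)
    refine h1.symm.trans ?_
    refine (condExp_congr_ae (hmart m)).trans ?_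
    rw [condExp_zero]
  -- conditional expectation of the shifted block given F i is zero
  have hBzero : μP[fun ω => S j (T^[i] ω)|F (i:ℤ)] =ᵐ[μP] 0 := by
    have e : (fun ω => S j (T^[i] ω))
        = ∑ k ∈ Finset.Icc 1 j, (fun ω => d0 (T^[k + i] ω)) := by
      funext ω
      simp only [hSdef, Finset.sum_apply]
      exact Finset.sum_congr rfl fun k _ => by rw [Function.iterate_add_apply]
    rw [e]
    have hint : ∀ k ∈ Finset.Icc 1 j, Integrable (fun ω => d0 (T^[k+i] ω)) μP := fun k _ =>
      (hdkmem (k+i)).integrable hp'1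
    refine (condExp_finsetSum hint _).trans ?_
    have hterm : ∀ k ∈ Finset.Icc 1 j,
        μP[fun ω => d0 (T^[k+i] ω)|F (i:ℤ)] =ᵐ[μP] 0 := by
      intro k hk
      have hk1 : 1 ≤ k := (Finset.mem_Icc.mp hk).1
      have e2 : k + i = (k - 1 + i) + 1 := by omega
      rw [e2]
      exact hmart' (k-1+i) i (by push_cast; omega)
    have := ae_finset_sum_eq_zero (Finset.Icc 1 j)
      (f := fun k => μP[fun ω => d0 (T^[k+i] ω)|F (i:ℤ)]) hterm
    refine EventuallyEq.trans ?_ this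
    filter_upwards with ω
    simp [Finset.sum_apply]
  -- cross term
  have hTFmeas : ∀ (k : ℤ) (n : ℕ), @Measurable Ω Ω (F (k + n)) (F k) (T^[n]) := fun k n =>
    measurable_iff_comap_le.mpr (le_of_eq (hFcomap k n).symm)
  have hSimeas : Measurable[F (i:ℤ)] (S i) := by
    apply Finset.measurable_sum
    intro k hk
    have hk2 : (k:ℤ) ≤ (i:ℤ) := by exact_mod_cast (Finset.mem_Icc.mp hk).2
    have hmk : Measurable[F ((k:ℤ))] (fun ω => d0 (T^[k] ω)) := by
      have h := hd0meas.comp (hTFmeas 0 k)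
      rw [show (0:ℤ) + (k:ℕ) = (k:ℤ) by ring] at h
      exact h
    exact hmk.mono (hFmono hk2) le_rfl
  have hcross0 : μP[fun ω => S i ω * S j (T^[i] ω)|F 0] =ᵐ[μP] 0 := by
    have hABcond : μP[fun ω => S i ω * S j (T^[i] ω)|F (i:ℤ)] =ᵐ[μP] 0 := by
      have hpull := condExp_mul_of_stronglyMeasurable_left (m := F (i:ℤ))
        (hSimeas.stronglyMeasurable) hABint hBint
      refine hpull.trans ?_
      filter_upwards [hBzero] with ω hω
      simp only [Pi.mul_apply, Pi.zero_apply] at *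
      rw [hω, mul_zero]
    have htower := condExp_condExp_of_le (μ := μP)
      (f := fun ω => S i ω * S j (T^[i] ω))
      (hFmono (show (0:ℤ) ≤ (i:ℤ) by positivity)) (hFle i)
    refine htower.symm.trans ?_
    refine (condExp_congr_ae hABcond).trans ?_
    rw [condExp_zero]
  have hcrossint : ∫ ω, S i ω * S j (T^[i] ω) ∂μP = 0 := by
    have h1 := integral_condExp (μ := μP) (f := fun ω => S i ω * S j (T^[i] ω)) (hFle 0)
    rw [← h1, integral_congr_ae hcross0]
    simp
  -- decomposition of S (i+j)
  have hsum : ∀ ω, S (i+j) ω = S i ω + S j (T^[i] ω) := by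
    intro ω
    have eI : ∀ n : ℕ, Finset.Icc 1 n = Finset.Ioc 0 n := by
      intro n; ext x; simp [Finset.mem_Icc, Finset.mem_Ioc]; omega
    simp only [hSdef, eI]
    rw [← Finset.sum_Ioc_consecutive _ (Nat.zero_le i) (Nat.le_add_right i j)]
    congr 1
    have emap : Finset.Ioc i (i+j) = (Finset.Ioc 0 j).map (addRightEmbedding i) := by
      rw [Finset.map_add_right_Ioc]
      congr 1 <;> omega
    rw [emap, Finset.sum_map]
    refine Finset.sum_congr rfl fun k _ => ?_
    simp only [addRightEmbedding_apply]
    rw [Function.iterate_add_apply]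
  -- notation for the centered conditional variances
  set c : ℕ → ℝ := fun n => ∫ ω, (S n ω)^2 ∂μP with hcdef
  set Z : ℕ → Ω → ℝ := fun n ω => (μP[fun ω' => (S n ω')^2|F 0]) ω - c n with hZdef
  set W : Ω → ℝ := fun ω => (μP[fun ω' => (S j (T^[i] ω'))^2|F 0]) ω - c j with hWdef
  -- expansion of the square
  have esq : (fun ω => (S (i+j) ω)^2)
      = fun ω => (S i ω)^2 + ((S j (T^[i] ω))^2 + 2 * (S i ω * S j (T^[i] ω))) := by
    funext ω; rw [hsum ω]; ring
  have hg2 : Integrable (fun ω => (S j (T^[i] ω))^2 + 2 * (S i ω * S j (T^[i] ω))) μP :=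
    hBsqint.add (hABint.const_mul 2)
  have hcij : c (i+j) = c i + c j := by
    simp only [hcdef]
    rw [esq, integral_add (hSsqint i) hg2,
      integral_add hBsqint (hABint.const_mul 2), integral_const_mul, hcrossint]
    have hBci : ∫ ω, (S j (T^[i] ω))^2 ∂μP = ∫ ω, (S j ω)^2 ∂μP :=
      (hTn i).integral_comp (hembn i) (fun ω => (S j ω)^2)
    rw [hBci]; ring
  -- main decomposition
  have hZdecomp : Z (i+j) =ᵐ[μP] fun ω => Z i ω + W ω := by
    have hexp : μP[fun ω => (S (i+j) ω)^2|F 0] =ᵐ[μP]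
        fun ω => (μP[fun ω' => (S i ω')^2|F 0]) ω
          + ((μP[fun ω' => (S j (T^[i] ω'))^2|F 0]) ω
            + 2 * (μP[fun ω' => S i ω' * S j (T^[i] ω')|F 0]) ω) := by
      rw [esq]
      refine (condExp_add (μ := μP) (hSsqint i) hg2 _).trans ?_
      have h2 : μP[fun ω => (S j (T^[i] ω))^2 + 2 * (S i ω * S j (T^[i] ω))|F 0] =ᵐ[μP]
          μP[fun ω => (S j (T^[i] ω))^2|F 0]
            + μP[fun ω => 2 * (S i ω * S j (T^[i] ω))|F 0] :=
        condExp_add (μ := μP) (m := F 0) hBsqint (hABint.const_mul 2)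
      have h3 : μP[fun ω => 2 * (S i ω * S j (T^[i] ω))|F 0]
          =ᵐ[μP] (2:ℝ) • μP[fun ω => S i ω * S j (T^[i] ω)|F 0] :=
        condExp_smul (m := F 0) (2:ℝ) (fun ω => S i ω * S j (T^[i] ω))
      filter_upwards [h2, h3] with ω e2 e3
      simp only [Pi.add_apply] at *
      rw [e2, e3]
      simp [smul_eq_mul]
    filter_upwards [hexp, hcross0] with ω h1 h2
    simp only [hZdef, hWdef]
    rw [h1, hcij]
    simp only [Pi.zero_apply] at h2
    rw [h2]
    ring
  -- membership facts
  have hZmem : ∀ n, MemLp (Z n) (ENNReal.ofReal (p/2)) μP := by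
    intro n
    have hE : MemLp (μP[fun ω' => (S n ω')^2|F 0]) (ENNReal.ofReal (p/2)) μP := by
      refine ⟨(stronglyMeasurable_condExp.mono (hFle 0)).aestronglyMeasurable, ?_⟩
      exact lt_of_le_of_lt (condExp_jensen_rpow (hFle 0) hq1 (hSsqmem n))
        (hSsqmem n).eLpNorm_lt_top
    exact hE.sub (memLp_const (c n))
  have hWaesm : AEStronglyMeasurable W μP :=
    ((stronglyMeasurable_condExp.mono (hFle 0)).aestronglyMeasurable).sub
      aestronglyMeasurable_const
  -- bound on the shifted block
  have hWbound : eLpNorm W (ENNReal.ofReal (p/2)) μP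
      ≤ eLpNorm (Z j) (ENNReal.ofReal (p/2)) μP := by
    have hF0comap : F 0 = MeasurableSpace.comap (T^[i]) (F (-(i:ℤ))) := by
      have h := hFcomap (-(i:ℤ)) i
      rw [show -(i:ℤ) + (i:ℕ) = 0 by ring] at h
      exact h
    have h1 : μP[fun ω => (S j (T^[i] ω))^2|F 0] =ᵐ[μP]
        (μP[fun ω => (S j ω)^2|F (-(i:ℤ))]) ∘ (T^[i]) := by
      rw [hF0comap]
      exact condExp_comp_measurePreserving (hTn i) (hembn i) (hFle _) (hSsqint j)
    have h2 : μP[Z j|F (-(i:ℤ))] =ᵐ[μP]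
        fun ω => (μP[fun ω' => (S j ω')^2|F (-(i:ℤ))]) ω - c j := by
      have ha := condExp_sub (μ := μP) (m := F (-(i:ℤ)))
        (f := μP[fun ω' => (S j ω')^2|F 0]) (g := fun _ => c j)
        integrable_condExp (integrable_const _)
      have hb := condExp_condExp_of_le (μ := μP) (f := fun ω' => (S j ω')^2)
        (hFmono (show -(i:ℤ) ≤ 0 by omega)) (hFle 0)
      have hc := condExp_const (μ := μP) (hFle (-(i:ℤ))) (c j)
      filter_upwards [ha, hb] with ω ea eb
      have : Z j = (μP[fun ω' => (S j ω')^2|F 0]) - (fun _ => c j) := by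
        funext ω'; simp [hZdef]
      rw [this, ea]
      simp only [Pi.sub_apply, eb, hc]
    have h3 : W =ᵐ[μP] (μP[Z j|F (-(i:ℤ))]) ∘ (T^[i]) := by
      have h2' := (hTn i).quasiMeasurePreserving.ae_eq h2
      refine EventuallyEq.trans ?_ h2'.symm
      filter_upwards [h1] with ω e1
      simp only [hWdef, Function.comp_apply] at *
      rw [e1]
    have hcomp := eLpNorm_comp_measurePreserving (μ := μP) (ν := μP)
      (g := μP[Z j|F (-(i:ℤ))]) (p := ENNReal.ofReal (p/2))
      (stronglyMeasurable_condExp.mono (hFle _)).aestronglyMeasurable (hTn i)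
    rw [eLpNorm_congr_ae h3, hcomp]
    exact condExp_jensen_rpow (hFle _) hq1 (hZmem j)
  -- conclusion
  have hVZ : ∀ n, V n = (eLpNorm (Z n) (ENNReal.ofReal (p/2)) μP).toReal := fun n => hV n
  rw [hVZ i, hVZ j, hVZ (i+j)]
  have hle : eLpNorm (Z (i+j)) (ENNReal.ofReal (p/2)) μP
      ≤ eLpNorm (Z i) (ENNReal.ofReal (p/2)) μP + eLpNorm (Z j) (ENNReal.ofReal (p/2)) μP := by
    calc eLpNorm (Z (i+j)) (ENNReal.ofReal (p/2)) μP
        = eLpNorm (fun ω => Z i ω + W ω) (ENNReal.ofReal (p/2)) μP := eLpNorm_congr_ae hZdecomp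
      _ ≤ eLpNorm (Z i) (ENNReal.ofReal (p/2)) μP + eLpNorm W (ENNReal.ofReal (p/2)) μP :=
          eLpNorm_add_le (hZmem i).aestronglyMeasurable hWaesm hq'1
      _ ≤ _ := by exact add_le_add le_rfl hWbound
  have hfin_i : eLpNorm (Z i) (ENNReal.ofReal (p/2)) μP ≠ ∞ := (hZmem i).eLpNorm_ne_top
  have hfin_j : eLpNorm (Z j) (ENNReal.ofReal (p/2)) μP ≠ ∞ := (hZmem j).eLpNorm_ne_top
  calc (eLpNorm (Z (i+j)) (ENNReal.ofReal (p/2)) μP).toReal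
      ≤ (eLpNorm (Z i) (ENNReal.ofReal (p/2)) μP
          + eLpNorm (Z j) (ENNReal.ofReal (p/2)) μP).toReal := by
        apply ENNReal.toReal_mono _ hle
        exact ENNReal.add_ne_top.mpr ⟨hfin_i, hfin_j⟩
    _ = _ := ENNReal.toReal_add hfin_i hfin_j
end
end
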